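/- arXiv:1603.07043 — 2 statements merged into one kernel-verified Lean document; each statement's English description precedes it below -/
import Mathlib

section
/- For t ∈ (0,1), density matrices ρ, σ, and the partial-swap convolution ρ ⋆_t σ = t·ρ + (1−t)·σ + i·√(t(1−t))·[ρ,σ], the operator ρ ⋆_t σ is a density matrix: it is self-adjoint, positive semidefinite, and has trace 1. -/
open Matrix ComplexOrder

/-- Eigenvalues of a Hermitian matrix listed in non-increasing order:
`eigDesc hA j` is the `j`-th largest eigenvalue of `A`. -/
noncomputable def eigDesc {n : ℕ} {A : Matrix (Fin n) (Fin n) ℂ} (hA : A.IsHermitian) :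
    Fin n → ℝ :=
  fun j => hA.eigenvalues (Tuple.sort hA.eigenvalues (Fin.rev j))

/-- The partial-swap convolution `A ⋆_t B = tA + (1-t)B + i√(t(1-t))[A,B]`. -/
noncomputable def pswap {n : ℕ} (t : ℝ) (A B : Matrix (Fin n) (Fin n) ℂ) :
    Matrix (Fin n) (Fin n) ℂ :=
  (t : ℂ) • A + ((1 - t : ℝ) : ℂ) • B
    + (Complex.I * (Real.sqrt (t * (1 - t)) : ℂ)) • (A * B - B * A)

lemma trace_eq_sum_eig {n : ℕ} {A : Matrix (Fin n) (Fin n) ℂ} (hA : A.IsHermitian) :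
    A.trace = ∑ i, (hA.eigenvalues i : ℂ) := by
  conv_lhs => rw [hA.spectral_theorem, Unitary.conjStarAlgAut_apply]
  rw [Matrix.trace_mul_cycle, Matrix.mem_unitaryGroup_iff'.mp (hA.eigenvectorUnitary).2,
    Matrix.one_mul, Matrix.trace_diagonal]
  rfl

lemma one_sub_psd {n : ℕ} {ρ : Matrix (Fin n) (Fin n) ℂ} (hρ : ρ.PosSemidef)
    (h1 : ρ.trace = 1) : (1 - ρ).PosSemidef := by
  have hH := hρ.1
  have hle : ∀ i, hH.eigenvalues i ≤ 1 := by
    intro i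
    have hs : ∑ j, hH.eigenvalues j = 1 := by
      have h := trace_eq_sum_eig hH
      rw [h1] at h
      have := congrArg Complex.re h
      simpa using this.symm
    calc hH.eigenvalues i ≤ ∑ j, hH.eigenvalues j :=
          Finset.single_le_sum (fun j _ => hρ.eigenvalues_nonneg j) (Finset.mem_univ i)
      _ = 1 := hs
  have key : (1 : Matrix (Fin n) (Fin n) ℂ) - ρ
      = (hH.eigenvectorUnitary : Matrix (Fin n) (Fin n) ℂ)
        * Matrix.diagonal (fun i => ((1 - hH.eigenvalues i : ℝ) : ℂ))
        * ((hH.eigenvectorUnitary : Matrix (Fin n) (Fin n) ℂ))ᴴ := by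
    have hU : (hH.eigenvectorUnitary : Matrix (Fin n) (Fin n) ℂ)
        * ((hH.eigenvectorUnitary : Matrix (Fin n) (Fin n) ℂ))ᴴ = 1 :=
      Matrix.mem_unitaryGroup_iff.mp (hH.eigenvectorUnitary).2
    have hd : Matrix.diagonal (fun i => ((1 - hH.eigenvalues i : ℝ) : ℂ))
        = 1 - Matrix.diagonal (RCLike.ofReal ∘ hH.eigenvalues) := by
      rw [← Matrix.diagonal_one, Matrix.diagonal_sub]
      congr 1
      ext i
      push_cast
      simp
    rw [hd, Matrix.mul_sub, Matrix.mul_one, Matrix.sub_mul, hU]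
    congr 1
    rw [← Matrix.star_eq_conjTranspose]
    exact hH.spectral_theorem
  rw [key]
  exact (Matrix.posSemidef_diagonal_iff.mpr (fun i => by
    have := sub_nonneg.mpr (hle i)
    exact_mod_cast Complex.zero_le_real.mpr this)).mul_mul_conjTranspose_same _

lemma self_sub_sq_psd {n : ℕ} {ρ : Matrix (Fin n) (Fin n) ℂ} (hρ : ρ.PosSemidef)
    (h1 : ρ.trace = 1) : (ρ - ρ * ρ).PosSemidef := by
  have h1ρ := one_sub_psd hρ h1
  obtain ⟨S, hS, hs⟩ : ∃ S : Matrix (Fin n) (Fin n) ℂ, S.PosSemidef ∧ S * S = ρ :=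
    open scoped MatrixOrder in
    ⟨CFC.sqrt ρ, (CFC.sqrt_nonneg ρ).posSemidef, CFC.sqrt_mul_sqrt_self ρ hρ.nonneg⟩
  subst hs
  have key : S * S - (S * S) * (S * S) = S * (1 - S * S) * Sᴴ := by
    rw [hS.1.eq]
    noncomm_ring
  rw [key]
  exact h1ρ.mul_mul_conjTranspose_same _

lemma cs_dot {n : ℕ} (u v : Fin n → ℂ) :
    ‖star u ⬝ᵥ v‖ ^ 2 ≤ (star u ⬝ᵥ u).re * (star v ⬝ᵥ v).re := by
  have h := norm_inner_le_norm (𝕜 := ℂ) ((WithLp.equiv 2 (Fin n → ℂ)).symm u)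
    ((WithLp.equiv 2 (Fin n → ℂ)).symm v)
  have e : ∀ a b : Fin n → ℂ, inner ℂ ((WithLp.equiv 2 (Fin n → ℂ)).symm a)
      ((WithLp.equiv 2 (Fin n → ℂ)).symm b) = star a ⬝ᵥ b := fun a b => by
    rw [dotProduct_comm]; rfl
  rw [e] at h
  have hu : (star u ⬝ᵥ u).re = ‖(WithLp.equiv 2 (Fin n → ℂ)).symm u‖ ^ 2 := by
    rw [← e]
    exact inner_self_eq_norm_sq (𝕜 := ℂ) ((WithLp.equiv 2 (Fin n → ℂ)).symm u)
  have hv : (star v ⬝ᵥ v).re = ‖(WithLp.equiv 2 (Fin n → ℂ)).symm v‖ ^ 2 := by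
    rw [← e]
    exact inner_self_eq_norm_sq (𝕜 := ℂ) ((WithLp.equiv 2 (Fin n → ℂ)).symm v)
  rw [hu, hv]
  calc ‖star u ⬝ᵥ v‖ ^ 2
      ≤ (‖(WithLp.equiv 2 (Fin n → ℂ)).symm u‖ * ‖(WithLp.equiv 2 (Fin n → ℂ)).symm v‖) ^ 2 := by
        apply pow_le_pow_left₀ (norm_nonneg _) h
    _ = _ := by ring

theorem stmt_15 {n : ℕ} (t : ℝ) (ht : t ∈ Set.Ioo (0 : ℝ) 1)
    (ρ σ : Matrix (Fin n) (Fin n) ℂ)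
    (hρ : ρ.PosSemidef) (hσ : σ.PosSemidef)
    (hρ1 : ρ.trace = 1) (hσ1 : σ.trace = 1) :
    (pswap t ρ σ).IsHermitian ∧ (pswap t ρ σ).PosSemidef ∧ (pswap t ρ σ).trace = 1 := by
  have hH : (pswap t ρ σ).IsHermitian := by
    unfold pswap
    unfold Matrix.IsHermitian
    simp only [conjTranspose_add, conjTranspose_smul, conjTranspose_sub, conjTranspose_mul,
      hρ.1.eq, hσ.1.eq, star_mul', Complex.star_def, Complex.conj_I, Complex.conj_ofReal]
    rw [smul_sub, smul_sub]
    ring_nf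
    module
  have htr : (pswap t ρ σ).trace = 1 := by
    unfold pswap
    simp only [trace_add, trace_smul, trace_sub, hρ1, hσ1, Matrix.trace_mul_comm ρ σ,
      sub_self, smul_zero, add_zero, smul_eq_mul, mul_one]
    push_cast
    ring
  refine ⟨hH, Matrix.PosSemidef.of_dotProduct_mulVec_nonneg hH ?_, htr⟩
  intro x
  have hρ2 := self_sub_sq_psd hρ hρ1
  have hσ2 := self_sub_sq_psd hσ hσ1
  obtain ⟨ht0, ht1⟩ := ht
  set c := Real.sqrt (t * (1 - t)) with hcdef
  have hc0 : 0 ≤ c := Real.sqrt_nonneg _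
  have hc2 : c ^ 2 = t * (1 - t) := Real.sq_sqrt (by nlinarith)
  set u := ρ *ᵥ x with hu
  set v := σ *ᵥ x with hv
  set z := star u ⬝ᵥ v with hzdef
  have hmulρ : ∀ M : Matrix (Fin n) (Fin n) ℂ,
      star x ⬝ᵥ (ρ * M) *ᵥ x = star u ⬝ᵥ (M *ᵥ x) := by
    intro M
    rw [← Matrix.mulVec_mulVec, Matrix.dotProduct_mulVec, hu, Matrix.star_mulVec, hρ.1.eq]
  have hmulσ : ∀ M : Matrix (Fin n) (Fin n) ℂ,
      star x ⬝ᵥ (σ * M) *ᵥ x = star v ⬝ᵥ (M *ᵥ x) := by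
    intro M
    rw [← Matrix.mulVec_mulVec, Matrix.dotProduct_mulVec, hv, Matrix.star_mulVec, hσ.1.eq]
  have hzconj : star v ⬝ᵥ u = starRingEnd ℂ z := by
    rw [hzdef, Matrix.star_dotProduct]
    rfl
  have hP := hρ.dotProduct_mulVec_nonneg x
  have hQ := hσ.dotProduct_mulVec_nonneg x
  rw [Complex.le_def] at hP hQ
  set P := (star x ⬝ᵥ ρ *ᵥ x).re with hPdef
  set Q := (star x ⬝ᵥ σ *ᵥ x).re with hQdef
  have hPc : star x ⬝ᵥ ρ *ᵥ x = (P : ℂ) := Complex.ext rfl (by simpa using hP.2.symm)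
  have hQc : star x ⬝ᵥ σ *ᵥ x = (Q : ℂ) := Complex.ext rfl (by simpa using hQ.2.symm)
  have hP0 : 0 ≤ P := by simpa using hP.1
  have hQ0 : 0 ≤ Q := by simpa using hQ.1
  have huu : (star u ⬝ᵥ u).re ≤ P := by
    have h := (hρ2.dotProduct_mulVec_nonneg x)
    rw [Complex.le_def] at h
    have h' := h.1
    rw [Matrix.sub_mulVec, dotProduct_sub, Complex.sub_re, hmulρ ρ, ← hu] at h'
    simp only [Complex.zero_re] at h'
    rw [hPdef]
    linarith
  have hvv : (star v ⬝ᵥ v).re ≤ Q := by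
    have h := (hσ2.dotProduct_mulVec_nonneg x)
    rw [Complex.le_def] at h
    have h' := h.1
    rw [Matrix.sub_mulVec, dotProduct_sub, Complex.sub_re, hmulσ σ, ← hv] at h'
    simp only [Complex.zero_re] at h'
    rw [hQdef]
    linarith
  have hzn : ‖z‖ ^ 2 ≤ P * Q := by
    calc ‖z‖ ^ 2 ≤ (star u ⬝ᵥ u).re * (star v ⬝ᵥ v).re := cs_dot u v
      _ ≤ P * Q := by
        have h0u : (0:ℂ) ≤ star u ⬝ᵥ u := dotProduct_star_self_nonneg u
        have h0v : (0:ℂ) ≤ star v ⬝ᵥ v := dotProduct_star_self_nonneg v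
        rw [Complex.le_def] at h0u h0v
        have h0u' : 0 ≤ (star u ⬝ᵥ u).re := by simpa using h0u.1
        have h0v' : 0 ≤ (star v ⬝ᵥ v).re := by simpa using h0v.1
        exact mul_le_mul huu hvv h0v' hP0
  have hD : star x ⬝ᵥ (pswap t ρ σ) *ᵥ x
      = ((t * P + (1 - t) * Q - 2 * c * z.im : ℝ) : ℂ) := by
    unfold pswap
    rw [Matrix.add_mulVec, Matrix.add_mulVec, Matrix.smul_mulVec,
      Matrix.smul_mulVec, Matrix.smul_mulVec, Matrix.sub_mulVec,
      dotProduct_add, dotProduct_add, dotProduct_smul,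
      dotProduct_smul, dotProduct_smul, dotProduct_sub,
      hmulρ σ, hmulσ ρ, ← hzdef, hzconj, hPc, hQc, Complex.sub_conj]
    push_cast
    simp only [smul_eq_mul]
    ring_nf
    simp only [Complex.I_sq]
    rw [show t - t ^ 2 = t * (1 - t) by ring, ← hcdef]
    ring
  rw [hD]
  rw [Complex.le_def]
  refine ⟨?_, by simp⟩
  simp only [Complex.ofReal_re, Complex.zero_re]
  have him : z.im ≤ ‖z‖ := by
    calc z.im ≤ |z.im| := le_abs_self _
      _ ≤ ‖z‖ := Complex.abs_im_le_norm z
      _ = ‖z‖ := rfl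
  have hzn0 : 0 ≤ ‖z‖ := norm_nonneg _
  have h2cz : 2 * c * z.im ≤ 2 * c * ‖z‖ := by nlinarith
  have ht1' : (0:ℝ) < 1 - t := by linarith
  have key : (2 * c * ‖z‖) ^ 2 ≤ (t * P + (1 - t) * Q) ^ 2 := by
    nlinarith [sq_nonneg (t * P - (1 - t) * Q), mul_pos ht0 ht1', hzn, hc2]
  have hX : 0 ≤ 2 * c * ‖z‖ := by positivity
  have hY : 0 ≤ t * P + (1 - t) * Q := by
    have := mul_nonneg ht0.le hP0
    have := mul_nonneg ht1'.le hQ0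
    linarith
  have h3 : 2 * c * ‖z‖ ≤ t * P + (1 - t) * Q := by nlinarith [key, hX, hY]
  linarith
end

section
/- Let A, B be non-negative contractions, t ∈ (0,1), X = λ₁(A)𝟙 − A, Y = λ₁(B)𝟙 − B, Z = √t X + i√(1−t) Y. If φ satisfies Xφ = φ or Yφ = φ, then ‖Z*φ‖ ≥ √(t(1−t))·‖φ‖; consequently any vector φ in the null space of t(X−X²) + (1−t)(Y−Y²) + ZZ* satisfies Xφ = 0 and Yφ = 0, i.e., Aφ = λ₁(A)φ and Bφ = λ₁(B)φ. -/
open Matrix ComplexOrder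

/-- The Euclidean (ℓ²) norm of a vector in `ℂ^n`. -/
noncomputable def vecEnorm {n : ℕ} (v : Fin n → ℂ) : ℝ :=
  Real.sqrt (∑ i, ‖v i‖ ^ 2)

lemma star_dot_self {n : ℕ} (w : Fin n → ℂ) :
    star w ⬝ᵥ w = ((∑ i, ‖w i‖ ^ 2 : ℝ) : ℂ) := by
  simp [dotProduct, Complex.star_def, Complex.conj_mul', Complex.ofReal_sum]

lemma real_of_nonneg {q : ℂ} (h : 0 ≤ q) : q = ((q.re : ℝ) : ℂ) := by
  rw [Complex.le_def] at h; apply Complex.ext <;> simp [← h.2]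

lemma re_of_nonneg {q : ℂ} (h : 0 ≤ q) : 0 ≤ q.re := by
  rw [Complex.le_def] at h; simpa using h.1

lemma key_lower {n : ℕ} {M : Matrix (Fin n) (Fin n) ℂ} (hM : M.PosSemidef)
    (c d : ℂ) (hcd : (star c * d).re = 0) (φ : Fin n → ℂ) :
    ‖c‖ ^ 2 * (∑ i, ‖φ i‖ ^ 2) ≤ ∑ i, ‖(c • φ + d • (M *ᵥ φ)) i‖ ^ 2 := by
  set ψ := M *ᵥ φ with hψ
  have hq : 0 ≤ star φ ⬝ᵥ ψ := hM.dotProduct_mulVec_nonneg φ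
  set q := star φ ⬝ᵥ ψ with hqdef
  have hqs : star ψ ⬝ᵥ φ = q := by
    calc star ψ ⬝ᵥ φ = star q := by
          simp [hqdef, dotProduct, Complex.star_def, mul_comm, map_sum]
      _ = q := by rw [real_of_nonneg hq]; exact Complex.conj_ofReal _
  have cross : star c * d + star d * c = 0 := by
    have h1 : star d * c = (starRingEnd ℂ) (star c * d) := by
      simp [Complex.star_def, _root_.map_mul]; ring
    rw [h1, Complex.add_conj, hcd]; simp
  have expand : star (c • φ + d • ψ) ⬝ᵥ (c • φ + d • ψ)
      = (star c * c) * (star φ ⬝ᵥ φ) + (star d * d) * (star ψ ⬝ᵥ ψ)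
        + (star c * d + star d * c) * q := by
    simp only [star_add, star_smul, add_dotProduct, dotProduct_add, smul_dotProduct,
      dotProduct_smul, smul_eq_mul, hqs, ← hqdef]
    ring
  rw [cross, zero_mul, add_zero, star_dot_self, star_dot_self,
    show star c * c = ((‖c‖ ^ 2 : ℝ) : ℂ) by rw [Complex.star_def, Complex.conj_mul']; push_cast; ring,
    show star d * d = ((‖d‖ ^ 2 : ℝ) : ℂ) by rw [Complex.star_def, Complex.conj_mul']; push_cast; ring]
    at expand
  rw [star_dot_self] at expand
  have expand' : (∑ i, ‖(c • φ + d • ψ) i‖ ^ 2 : ℝ)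
      = ‖c‖ ^ 2 * ∑ i, ‖φ i‖ ^ 2 + ‖d‖ ^ 2 * ∑ i, ‖ψ i‖ ^ 2 := by exact_mod_cast expand
  rw [expand']
  have h2 : (0:ℝ) ≤ ‖d‖ ^ 2 * ∑ i, ‖ψ i‖ ^ 2 := by positivity
  linarith

lemma eigDesc_ge {n : ℕ} [NeZero n] {A : Matrix (Fin n) (Fin n) ℂ} (hA : A.IsHermitian)
    (i : Fin n) : hA.eigenvalues i ≤ eigDesc hA 0 := by
  have hm := Tuple.monotone_sort hA.eigenvalues
  have h1 : (Tuple.sort hA.eigenvalues).symm i ≤ Fin.rev 0 := by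
    rw [Fin.le_def, Fin.val_rev]
    simp only [Fin.val_zero]
    have := ((Tuple.sort hA.eigenvalues).symm i).isLt
    omega
  have h2 := hm h1
  simpa [Function.comp, eigDesc] using h2

lemma smul_one_eq_diag {n : ℕ} (c : ℂ) :
    c • (1 : Matrix (Fin n) (Fin n) ℂ) = diagonal (fun _ => c) := by
  ext i j
  by_cases h : i = j <;> simp [Matrix.one_apply, h]

lemma posSemidef_X {n : ℕ} [NeZero n] {A : Matrix (Fin n) (Fin n) ℂ} (hA : A.IsHermitian) :
    ((eigDesc hA 0 : ℂ) • 1 - A).PosSemidef := by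
  have hU : (hA.eigenvectorUnitary : Matrix (Fin n) (Fin n) ℂ) *
      star (hA.eigenvectorUnitary : Matrix (Fin n) (Fin n) ℂ) = 1 :=
    Matrix.mem_unitaryGroup_iff.mp (hA.eigenvectorUnitary).2
  have hDiag : diagonal (fun i => ((eigDesc hA 0 - hA.eigenvalues i : ℝ) : ℂ))
      = (eigDesc hA 0 : ℂ) • 1 - diagonal (RCLike.ofReal ∘ hA.eigenvalues) := by
    rw [smul_one_eq_diag]
    ext i j
    by_cases h : i = j <;> simp [Matrix.diagonal_apply, h, Function.comp, Matrix.sub_apply]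
  have key : (eigDesc hA 0 : ℂ) • 1 - A
      = (hA.eigenvectorUnitary : Matrix (Fin n) (Fin n) ℂ) *
        diagonal (fun i => ((eigDesc hA 0 - hA.eigenvalues i : ℝ) : ℂ)) *
        star (hA.eigenvectorUnitary : Matrix (Fin n) (Fin n) ℂ) := by
    rw [hDiag, mul_sub, sub_mul, mul_smul_comm, smul_mul_assoc, mul_one, hU]
    congr 1
    simpa using hA.spectral_theorem
  rw [key, Matrix.star_eq_conjTranspose]
  exact (Matrix.posSemidef_diagonal_iff.mpr fun i =>
    Complex.zero_le_real.mpr (by linarith [eigDesc_ge hA i])).mul_mul_conjTranspose_same _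

lemma eig_le_one {n : ℕ} {A : Matrix (Fin n) (Fin n) ℂ} (hA : A.IsHermitian)
    (hA1 : (1 - A).PosSemidef) (i : Fin n) : hA.eigenvalues i ≤ 1 := by
  set v : Fin n → ℂ := ⇑(hA.eigenvectorBasis i) with hv
  have hnorm : star v ⬝ᵥ v = 1 := by
    have h1 : (inner ℂ (hA.eigenvectorBasis i) (hA.eigenvectorBasis i) : ℂ) = 1 := by
      rw [inner_self_eq_norm_sq_to_K]
      simp [hA.eigenvectorBasis.orthonormal.1 i]
    rwa [EuclideanSpace.inner_eq_star_dotProduct, dotProduct_comm] at h1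
  have hmul : A *ᵥ v = (hA.eigenvalues i : ℂ) • v := by
    have := hA.mulVec_eigenvectorBasis i
    rw [hv, this]
    ext j
    simp [Complex.real_smul]
  have h0 := hA1.dotProduct_mulVec_nonneg v
  rw [Matrix.sub_mulVec, Matrix.one_mulVec, hmul, dotProduct_sub, dotProduct_smul, hnorm,
    smul_eq_mul, mul_one] at h0
  have := re_of_nonneg h0
  simp at this
  linarith

lemma posSemidef_smul_one {n : ℕ} {c : ℝ} (hc : 0 ≤ c) :
    ((c : ℂ) • (1 : Matrix (Fin n) (Fin n) ℂ)).PosSemidef := by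
  rw [smul_one_eq_diag]
  exact Matrix.posSemidef_diagonal_iff.mpr fun i => Complex.zero_le_real.mpr hc

lemma posSemidef_sub_sq {n : ℕ} {X : Matrix (Fin n) (Fin n) ℂ} (hX : X.PosSemidef)
    (h1X : (1 - X).PosSemidef) : (X - X * X).PosSemidef := by
  obtain ⟨S, hS, hSS⟩ : ∃ S : Matrix (Fin n) (Fin n) ℂ, S.IsHermitian ∧ S * S = X := by
    open scoped MatrixOrder in
    refine ⟨CFC.sqrt X, (Matrix.nonneg_iff_posSemidef.mp (CFC.sqrt_nonneg X)).1, ?_⟩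
    open scoped MatrixOrder in
    have := CFC.sq_sqrt X hX.nonneg
    rwa [pow_two] at this
  subst hSS
  have key : S * (1 - S * S) * Sᴴ = S * S - (S * S) * (S * S) := by
    rw [hS.eq]
    noncomm_ring
  rw [← key]
  exact h1X.mul_mul_conjTranspose_same _

theorem stmt_16 {n : ℕ} [NeZero n] (t : ℝ) (ht : t ∈ Set.Ioo (0 : ℝ) 1)
    (A B X Y Z : Matrix (Fin n) (Fin n) ℂ)
    (hA : A.PosSemidef) (hB : B.PosSemidef)
    (hA1 : (1 - A).PosSemidef) (hB1 : (1 - B).PosSemidef)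
    (hX : X = (eigDesc hA.isHermitian 0 : ℂ) • 1 - A)
    (hY : Y = (eigDesc hB.isHermitian 0 : ℂ) • 1 - B)
    (hZ : Z = (Real.sqrt t : ℂ) • X + (Complex.I * (Real.sqrt (1 - t) : ℂ)) • Y) :
    (∀ φ : Fin n → ℂ, (X *ᵥ φ = φ ∨ Y *ᵥ φ = φ) →
        Real.sqrt (t * (1 - t)) * vecEnorm φ ≤ vecEnorm (Zᴴ *ᵥ φ)) ∧
    ∀ φ : Fin n → ℂ,
      ((t : ℂ) • (X - X * X) + ((1 - t : ℝ) : ℂ) • (Y - Y * Y) + Z * Zᴴ) *ᵥ φ = 0 →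
        X *ᵥ φ = 0 ∧ Y *ᵥ φ = 0 ∧
        A *ᵥ φ = (eigDesc hA.isHermitian 0 : ℂ) • φ ∧
        B *ᵥ φ = (eigDesc hB.isHermitian 0 : ℂ) • φ := by
  obtain ⟨ht0, ht1⟩ := ht
  have hXpsd : X.PosSemidef := hX ▸ posSemidef_X hA.isHermitian
  have hYpsd : Y.PosSemidef := hY ▸ posSemidef_X hB.isHermitian
  have h1X : (1 - X).PosSemidef := by
    have hle : eigDesc hA.isHermitian 0 ≤ 1 := eig_le_one hA.isHermitian hA1 _
    have heq : (1 : Matrix (Fin n) (Fin n) ℂ) - X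
        = ((1 - eigDesc hA.isHermitian 0 : ℝ) : ℂ) • 1 + A := by
      rw [hX]
      push_cast
      module
    rw [heq]
    exact (posSemidef_smul_one (by linarith)).add hA
  have h1Y : (1 - Y).PosSemidef := by
    have hle : eigDesc hB.isHermitian 0 ≤ 1 := eig_le_one hB.isHermitian hB1 _
    have heq : (1 : Matrix (Fin n) (Fin n) ℂ) - Y
        = ((1 - eigDesc hB.isHermitian 0 : ℝ) : ℂ) • 1 + B := by
      rw [hY]
      push_cast
      module
    rw [heq]
    exact (posSemidef_smul_one (by linarith)).add hB
  have hXX : (X - X * X).PosSemidef := posSemidef_sub_sq hXpsd h1X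
  have hYY : (Y - Y * Y).PosSemidef := posSemidef_sub_sq hYpsd h1Y
  have hZt : Zᴴ = (Real.sqrt t : ℂ) • X + (-(Complex.I * (Real.sqrt (1 - t) : ℂ))) • Y := by
    rw [hZ, conjTranspose_add, conjTranspose_smul, conjTranspose_smul, hXpsd.1.eq, hYpsd.1.eq]
    congr 1
    · congr 1
      simp [Complex.star_def, Complex.conj_ofReal]
    · congr 1
      simp [Complex.star_def, _root_.map_mul, Complex.conj_ofReal, Complex.conj_I]
  constructor
  · rintro φ (hφ | hφ)
    · have hcross : (star (Real.sqrt t : ℂ) * (-(Complex.I * (Real.sqrt (1 - t) : ℂ)))).re = 0 := by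
        simp [Complex.star_def, Complex.conj_ofReal, Complex.mul_re]
      have hkey := key_lower hYpsd (Real.sqrt t : ℂ)
        (-(Complex.I * (Real.sqrt (1 - t) : ℂ))) hcross φ
      have hw : Zᴴ *ᵥ φ = (Real.sqrt t : ℂ) • φ
          + (-(Complex.I * (Real.sqrt (1 - t) : ℂ))) • (Y *ᵥ φ) := by
        rw [hZt, Matrix.add_mulVec, Matrix.smul_mulVec, Matrix.smul_mulVec, hφ]
      have hc2 : ‖((Real.sqrt t : ℝ) : ℂ)‖ ^ 2 = t := by
        rw [Complex.norm_real, Real.norm_eq_abs, sq_abs, Real.sq_sqrt ht0.le]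
      rw [hc2] at hkey
      rw [vecEnorm, vecEnorm, hw]
      have hSφ : (0:ℝ) ≤ ∑ i, ‖φ i‖ ^ 2 := Finset.sum_nonneg fun i _ => sq_nonneg _
      have h1 : t * (1 - t) * (∑ i, ‖φ i‖ ^ 2) ≤ t * (∑ i, ‖φ i‖ ^ 2) := by
        nlinarith [mul_nonneg (mul_nonneg ht0.le ht0.le) hSφ]
      calc Real.sqrt (t * (1 - t)) * Real.sqrt (∑ i, ‖φ i‖ ^ 2)
          = Real.sqrt (t * (1 - t) * ∑ i, ‖φ i‖ ^ 2) :=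
            (Real.sqrt_mul (mul_nonneg ht0.le (by linarith)) _).symm
        _ ≤ _ := Real.sqrt_le_sqrt (h1.trans hkey)
    · have hcross : (star (-(Complex.I * (Real.sqrt (1 - t) : ℂ))) * (Real.sqrt t : ℂ)).re = 0 := by
        simp [Complex.star_def, _root_.map_mul, Complex.conj_ofReal, Complex.conj_I,
          Complex.mul_re]
      have hkey := key_lower hXpsd (-(Complex.I * (Real.sqrt (1 - t) : ℂ)))
        (Real.sqrt t : ℂ) hcross φ
      have hw : Zᴴ *ᵥ φ = (-(Complex.I * (Real.sqrt (1 - t) : ℂ))) • φ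
          + (Real.sqrt t : ℂ) • (X *ᵥ φ) := by
        rw [hZt, Matrix.add_mulVec, Matrix.smul_mulVec, Matrix.smul_mulVec, hφ]
        exact add_comm _ _
      have hc2 : ‖(-(Complex.I * (Real.sqrt (1 - t) : ℂ)))‖ ^ 2 = 1 - t := by
        rw [norm_neg, norm_mul, Complex.norm_I, one_mul, Complex.norm_real, Real.norm_eq_abs,
          sq_abs, Real.sq_sqrt (by linarith)]
      rw [hc2] at hkey
      rw [vecEnorm, vecEnorm, hw]
      have hSφ : (0:ℝ) ≤ ∑ i, ‖φ i‖ ^ 2 := Finset.sum_nonneg fun i _ => sq_nonneg _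
      have h1 : t * (1 - t) * (∑ i, ‖φ i‖ ^ 2) ≤ (1 - t) * (∑ i, ‖φ i‖ ^ 2) := by
        nlinarith [mul_nonneg (mul_nonneg (by linarith : (0:ℝ) ≤ 1 - t)
          (by linarith : (0:ℝ) ≤ 1 - t)) hSφ]
      calc Real.sqrt (t * (1 - t)) * Real.sqrt (∑ i, ‖φ i‖ ^ 2)
          = Real.sqrt (t * (1 - t) * ∑ i, ‖φ i‖ ^ 2) :=
            (Real.sqrt_mul (mul_nonneg ht0.le (by linarith)) _).symm
        _ ≤ _ := Real.sqrt_le_sqrt (h1.trans hkey)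
  · intro φ hφ
    have h0 : star φ ⬝ᵥ (((t : ℂ) • (X - X * X) + ((1 - t : ℝ) : ℂ) • (Y - Y * Y) + Z * Zᴴ) *ᵥ φ)
        = 0 := by rw [hφ, dotProduct_zero]
    rw [Matrix.add_mulVec, Matrix.add_mulVec, Matrix.smul_mulVec,
      Matrix.smul_mulVec, dotProduct_add, dotProduct_add, dotProduct_smul,
      dotProduct_smul, smul_eq_mul, smul_eq_mul] at h0
    have hq1 : 0 ≤ star φ ⬝ᵥ ((X - X * X) *ᵥ φ) := hXX.dotProduct_mulVec_nonneg φ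
    have hq2 : 0 ≤ star φ ⬝ᵥ ((Y - Y * Y) *ᵥ φ) := hYY.dotProduct_mulVec_nonneg φ
    have hq3 : star φ ⬝ᵥ ((Z * Zᴴ) *ᵥ φ) = ((∑ i, ‖(Zᴴ *ᵥ φ) i‖ ^ 2 : ℝ) : ℂ) := by
      have hst : star (Zᴴ *ᵥ φ) = star φ ᵥ* Z := by
        rw [Matrix.star_mulVec, Matrix.conjTranspose_conjTranspose]
      rw [← Matrix.mulVec_mulVec, Matrix.dotProduct_mulVec, ← hst, star_dot_self]
    rw [real_of_nonneg hq1, real_of_nonneg hq2, hq3] at h0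
    set r1 := (star φ ⬝ᵥ ((X - X * X) *ᵥ φ)).re with hr1
    set r2 := (star φ ⬝ᵥ ((Y - Y * Y) *ᵥ φ)).re with hr2
    have hr1n : 0 ≤ r1 := re_of_nonneg hq1
    have hr2n : 0 ≤ r2 := re_of_nonneg hq2
    have h0' : t * r1 + (1 - t) * r2 + (∑ i, ‖(Zᴴ *ᵥ φ) i‖ ^ 2) = 0 := by
      exact_mod_cast h0
    have hS3n : (0:ℝ) ≤ ∑ i, ‖(Zᴴ *ᵥ φ) i‖ ^ 2 := Finset.sum_nonneg fun i _ => sq_nonneg _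
    have hS3 : (∑ i, ‖(Zᴴ *ᵥ φ) i‖ ^ 2) = 0 := by
      have p1 : 0 ≤ t * r1 := mul_nonneg ht0.le hr1n
      have p2 : 0 ≤ (1 - t) * r2 := mul_nonneg (by linarith) hr2n
      linarith
    have hw0 : Zᴴ *ᵥ φ = 0 := by
      funext i
      have hle : ‖(Zᴴ *ᵥ φ) i‖ ^ 2 = 0 := by
        have := Finset.sum_eq_zero_iff_of_nonneg
          (fun j _ => sq_nonneg ‖(Zᴴ *ᵥ φ) j‖ : ∀ j ∈ Finset.univ, (0:ℝ) ≤ ‖(Zᴴ *ᵥ φ) j‖ ^ 2)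
        exact (this.mp hS3) i (Finset.mem_univ i)
      simpa using pow_eq_zero_iff (n := 2) (by norm_num) |>.mp hle
    rw [hZt, Matrix.add_mulVec, Matrix.smul_mulVec, Matrix.smul_mulVec] at hw0
    have hdot := congrArg (fun v => star φ ⬝ᵥ v) hw0
    simp only [dotProduct_add, dotProduct_smul, dotProduct_zero, smul_eq_mul] at hdot
    have hqX : 0 ≤ star φ ⬝ᵥ (X *ᵥ φ) := hXpsd.dotProduct_mulVec_nonneg φ
    have hqY : 0 ≤ star φ ⬝ᵥ (Y *ᵥ φ) := hYpsd.dotProduct_mulVec_nonneg φ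
    rw [real_of_nonneg hqX, real_of_nonneg hqY] at hdot
    set rX := (star φ ⬝ᵥ (X *ᵥ φ)).re with hrX
    set rY := (star φ ⬝ᵥ (Y *ᵥ φ)).re with hrY
    have hrXn : 0 ≤ rX := re_of_nonneg hqX
    have hrYn : 0 ≤ rY := re_of_nonneg hqY
    have hst : (0:ℝ) < Real.sqrt t := Real.sqrt_pos.mpr ht0
    have hst' : (0:ℝ) < Real.sqrt (1 - t) := Real.sqrt_pos.mpr (by linarith)
    rw [Complex.ext_iff] at hdot
    obtain ⟨hdre, hdim⟩ := hdot
    simp [Complex.mul_re, Complex.mul_im] at hdre hdim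
    have hrX0 : rX = 0 := by
      rcases hdre with h | h
      · linarith
      · exact h
    have hrY0 : rY = 0 := by
      rcases hdim with h | h
      · linarith
      · exact h
    have hXφ : X *ᵥ φ = 0 := by
      apply (hXpsd.dotProduct_mulVec_zero_iff φ).mp
      rw [real_of_nonneg hqX, ← hrX, hrX0]
      simp
    have hYφ : Y *ᵥ φ = 0 := by
      apply (hYpsd.dotProduct_mulVec_zero_iff φ).mp
      rw [real_of_nonneg hqY, ← hrY, hrY0]
      simp
    refine ⟨hXφ, hYφ, ?_, ?_⟩
    · have := hXφ
      rw [hX, Matrix.sub_mulVec, Matrix.smul_mulVec, Matrix.one_mulVec] at this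
      exact (sub_eq_zero.mp this).symm
    · have := hYφ
      rw [hY, Matrix.sub_mulVec, Matrix.smul_mulVec, Matrix.one_mulVec] at this
      exact (sub_eq_zero.mp this).symm
end
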